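/- For any cycle C_n with n ≥ 4, rc(C_n) = ⌊n/2⌋ − 1. -/

import Mathlib

open SimpleGraph

/-- The cop's sequence of positions, given his initial vertex `c₀` and a
(history-dependent) strategy `F`, where `F n` determines the cop's `(n+1)`-st
position from the robber's positions `r 0, …, r n` seen so far. -/
def copSeq {V : Type*} (c₀ : V) (F : (n : ℕ) → (Fin (n + 1) → V) → V)
    (r : ℕ → V) : ℕ → V
  | 0 => c₀
  | n + 1 => F n (fun i : Fin (n + 1) => r i)

/-- The cop has a winning strategy in the cop and robber game with radius of
capture `k` on the graph `G`: the cop chooses a starting vertex and a strategy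
such that, against every legal play of the robber (at each step the robber
stays or moves to an adjacent vertex; his moves may depend on the whole
history), the cop's play is legal and at some point of the game the distance
between the two players is at most `k`. -/
def CopWinRC {V : Type*} (G : SimpleGraph V) (k : ℕ) : Prop :=
  ∃ (c₀ : V) (F : (n : ℕ) → (Fin (n + 1) → V) → V),
    ∀ r : ℕ → V,
      (∀ i, r (i + 1) = r i ∨ G.Adj (r i) (r (i + 1))) →
      ((∀ n, copSeq c₀ F r (n + 1) = copSeq c₀ F r n
            ∨ G.Adj (copSeq c₀ F r n) (copSeq c₀ F r (n + 1))) ∧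
        ∃ n, G.dist (copSeq c₀ F r n) (r n) ≤ k
           ∨ G.dist (copSeq c₀ F r (n + 1)) (r n) ≤ k)

/-- The radius capture number of `G`: the least `k` such that the cop wins
the cop and robber game with radius of capture `k`. -/
noncomputable def rcNum {V : Type*} (G : SimpleGraph V) : ℕ :=
  sInf {k | CopWinRC G k}

/-- Eccentricity of a vertex: the maximum distance to another vertex. -/
noncomputable def graphEcc {V : Type*} (G : SimpleGraph V) (v : V) : ℕ :=
  sSup (Set.range (G.dist v))

/-- Radius of a graph: the minimum eccentricity. -/
noncomputable def graphRad {V : Type*} (G : SimpleGraph V) : ℕ :=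
  sInf (Set.range (graphEcc G))

open scoped Fin.CommRing

lemma val_add_val (n : ℕ) (u v : Fin (n + 2)) (h : u ≠ v) :
    (v - u).val + (u - v).val = n + 2 := by
  have h0 : (v - u) + (u - v) = 0 := by ring
  have hmod : ((v - u).val + (u - v).val) % (n + 2) = 0 := by
    rw [← Fin.val_add, h0]; rfl
  have h1 : (v - u).val ≠ 0 := fun h' =>
    sub_ne_zero_of_ne h.symm (Fin.ext (by simpa using h'))
  have h2 : (v - u).val < n + 2 := (v - u).isLt
  have h3 : (u - v).val < n + 2 := (u - v).isLt
  obtain ⟨c, hc⟩ := Nat.dvd_of_mod_eq_zero hmod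
  match c with
  | 0 => omega
  | 1 => omega
  | (c + 2) => nlinarith

lemma cycle_min_le_length (n : ℕ) {u v : Fin (n + 2)}
    (p : (cycleGraph (n + 2)).Walk u v) :
    min (v - u).val (u - v).val ≤ p.length := by
  induction p with
  | nil => simp
  | @cons u w v h p ih =>
    rw [cycleGraph_adj] at h
    have hsum1 : (v - u).val + (u - v).val = n + 2 ∨ ((v-u).val = 0 ∧ (u-v).val = 0) := by
      by_cases huv : u = v
      · subst huv; simp
      · exact Or.inl (val_add_val n u v huv)
    have hsum2 : (v - w).val + (w - v).val = n + 2 ∨ ((v-w).val = 0 ∧ (w-v).val = 0) := by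
      by_cases hwv : w = v
      · subst hwv; simp
      · exact Or.inl (val_add_val n w v hwv)
    rw [Walk.length_cons]
    rcases h with h | h
    · -- u - w = 1
      have ha' : v - w = (v - u) + 1 := by rw [← h]; ring
      have hb : u - v = (w - v) + 1 := by rw [← h]; ring
      have e1 : (v - w).val = ((v - u).val + 1) % (n + 2) := by
        rw [ha', Fin.val_add, Fin.val_one]
      have e2 : (u - v).val = ((w - v).val + 1) % (n + 2) := by
        rw [hb, Fin.val_add, Fin.val_one]
      have l1 : (v - u).val < n + 2 := (v - u).isLt
      have l2 : (w - v).val < n + 2 := (w - v).isLt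
      rcases Nat.lt_or_ge ((v - u).val + 1) (n + 2) with hlt | hge
      · rw [Nat.mod_eq_of_lt hlt] at e1
        rcases Nat.lt_or_ge ((w - v).val + 1) (n + 2) with hlt2 | hge2
        · rw [Nat.mod_eq_of_lt hlt2] at e2
          omega
        · have : (w - v).val + 1 = n + 2 := by omega
          rw [this, Nat.mod_self] at e2
          omega
      · have : (v - u).val + 1 = n + 2 := by omega
        rw [this, Nat.mod_self] at e1
        rcases Nat.lt_or_ge ((w - v).val + 1) (n + 2) with hlt2 | hge2
        · rw [Nat.mod_eq_of_lt hlt2] at e2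
          omega
        · have h2' : (w - v).val + 1 = n + 2 := by omega
          rw [h2', Nat.mod_self] at e2
          omega
    · -- w - u = 1
      have ha : v - u = (v - w) + 1 := by rw [← h]; ring
      have hb' : w - v = (u - v) + 1 := by rw [← h]; ring
      have e1 : (v - u).val = ((v - w).val + 1) % (n + 2) := by
        rw [ha, Fin.val_add, Fin.val_one]
      have e2 : (w - v).val = ((u - v).val + 1) % (n + 2) := by
        rw [hb', Fin.val_add, Fin.val_one]
      have l1 : (v - w).val < n + 2 := (v - w).isLt
      have l2 : (u - v).val < n + 2 := (u - v).isLt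
      rcases Nat.lt_or_ge ((v - w).val + 1) (n + 2) with hlt | hge
      · rw [Nat.mod_eq_of_lt hlt] at e1
        rcases Nat.lt_or_ge ((u - v).val + 1) (n + 2) with hlt2 | hge2
        · rw [Nat.mod_eq_of_lt hlt2] at e2
          omega
        · have : (u - v).val + 1 = n + 2 := by omega
          rw [this, Nat.mod_self] at e2
          omega
      · have : (v - w).val + 1 = n + 2 := by omega
        rw [this, Nat.mod_self] at e1
        rcases Nat.lt_or_ge ((u - v).val + 1) (n + 2) with hlt2 | hge2
        · rw [Nat.mod_eq_of_lt hlt2] at e2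
          omega
        · have h2' : (u - v).val + 1 = n + 2 := by omega
          rw [h2', Nat.mod_self] at e2
          omega

lemma cycle_dist_le (n : ℕ) (u v : Fin (n + 2)) :
    (cycleGraph (n + 2)).dist u v ≤ (v - u).val := by
  have key : ∀ (m : ℕ) (u : Fin (n + 2)),
      ∃ p : (cycleGraph (n + 2)).Walk u (u + (m : Fin (n + 2))), p.length = m := by
    intro m
    induction m with
    | zero => intro u; exact ⟨Walk.nil.copy rfl (by simp), by simp⟩
    | succ m ih =>
      intro u
      obtain ⟨p, hp⟩ := ih u
      have hadj : (cycleGraph (n + 2)).Adj (u + (m : Fin (n + 2)))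
          (u + (m : Fin (n + 2)) + 1) := by
        rw [cycleGraph_adj]
        right; ring
      refine ⟨(p.concat hadj).copy rfl (by push_cast; ring), by simp [hp]⟩
  obtain ⟨p, hp⟩ := key (v - u).val u
  have heq : u + (((v - u).val : ℕ) : Fin (n + 2)) = v := by
    rw [Fin.cast_val_eq_self]; ring
  have hd := SimpleGraph.dist_le p
  rw [hp] at hd
  calc (cycleGraph (n + 2)).dist u v
      = (cycleGraph (n + 2)).dist u (u + (((v - u).val : ℕ) : Fin (n + 2))) := by rw [heq]
    _ ≤ (v - u).val := hd

lemma cycle_dist (n : ℕ) (u v : Fin (n + 2)) :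
    (cycleGraph (n + 2)).dist u v = min (v - u).val (u - v).val := by
  refine le_antisymm (le_min (cycle_dist_le n u v) ?_) ?_
  · rw [SimpleGraph.dist_comm]
    exact cycle_dist_le n v u
  · obtain ⟨p, hp⟩ := (cycleGraph_connected (n := n + 1)).exists_walk_length_eq_dist u v
    rw [← hp]
    exact cycle_min_le_length n p

lemma cycle_ecc (n : ℕ) (u v : Fin (n + 2)) :
    (cycleGraph (n + 2)).dist u v ≤ (n + 2) / 2 := by
  rw [cycle_dist]
  by_cases h : u = v
  · subst h; simp
  · have := val_add_val n u v h
    omega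

lemma exists_adj_of_dist {V : Type*} (G : SimpleGraph V) (hconn : G.Connected) {u v : V}
    {d : ℕ} (h : G.dist u v = d + 1) :
    ∃ w, G.Adj u w ∧ G.dist w v + 1 = G.dist u v := by
  obtain ⟨p, hp⟩ := hconn.exists_walk_length_eq_dist u v
  cases p with
  | nil => rw [h] at hp; simp at hp
  | @cons _ w _ hadj q =>
    refine ⟨w, hadj, ?_⟩
    have h1 : G.dist w v ≤ q.length := SimpleGraph.dist_le q
    have h2 : G.dist u v ≤ G.dist u w + G.dist w v := hconn.dist_triangle
    have h3 : G.dist u w ≤ 1 := by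
      have := SimpleGraph.dist_le (Walk.cons hadj Walk.nil)
      simpa using this
    have h4 : q.length + 1 = G.dist u v := by simpa using hp
    omega

lemma cycle_adj_shift (n : ℕ) (δ : Fin (n + 2)) {u v : Fin (n + 2)}
    (h : (cycleGraph (n + 2)).Adj u v) :
    (cycleGraph (n + 2)).Adj (u + δ) (v + δ) := by
  rw [cycleGraph_adj] at h ⊢
  have e1 : u + δ - (v + δ) = u - v := by ring
  have e2 : v + δ - (u + δ) = v - u := by ring
  rw [e1, e2]
  exact h


open Classical in
noncomputable def copF (n : ℕ) : (t : ℕ) → (Fin (t + 1) → Fin (n + 1)) → Fin (n + 1) :=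
  fun t h =>
    if h' : ∃ w, (cycleGraph (n + 1)).Adj 0 w ∧
        (cycleGraph (n + 1)).dist w (h ⟨0, Nat.succ_pos t⟩) + 1 =
          (cycleGraph (n + 1)).dist 0 (h ⟨0, Nat.succ_pos t⟩)
    then h'.choose else 0

open Classical in
lemma copF_eq (n : ℕ) (r : ℕ → Fin (n + 1)) (t : ℕ) :
    copSeq 0 (copF n) r (t + 1) =
      if h' : ∃ w, (cycleGraph (n + 1)).Adj 0 w ∧
          (cycleGraph (n + 1)).dist w (r 0) + 1 = (cycleGraph (n + 1)).dist 0 (r 0)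
      then h'.choose else 0 := rfl

def chase (n : ℕ) (δ : Fin n) (c₀ : Fin n)
    (F : (m : ℕ) → (Fin (m + 1) → Fin n) → Fin n) : ℕ → Fin n
  | 0 => c₀ + δ
  | m + 1 =>
    if F m (fun i => chase n δ c₀ F i) = chase n δ c₀ F m - δ ∨
        (cycleGraph n).Adj (chase n δ c₀ F m - δ) (F m (fun i => chase n δ c₀ F i))
    then F m (fun i => chase n δ c₀ F i) + δ
    else chase n δ c₀ F m
termination_by m => m
decreasing_by all_goals first | exact i.isLt | omega

lemma chase_legal (n : ℕ) (δ : Fin (n + 2)) (c₀ : Fin (n + 2))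
    (F : (m : ℕ) → (Fin (m + 1) → Fin (n + 2)) → Fin (n + 2)) (m : ℕ) :
    chase (n + 2) δ c₀ F (m + 1) = chase (n + 2) δ c₀ F m ∨
      (cycleGraph (n + 2)).Adj (chase (n + 2) δ c₀ F m) (chase (n + 2) δ c₀ F (m + 1)) := by
  rw [chase]
  split
  · rename_i hc
    rcases hc with hc | hc
    · left; rw [hc]; ring
    · right
      have := cycle_adj_shift n δ hc
      have he : chase (n + 2) δ c₀ F m - δ + δ = chase (n + 2) δ c₀ F m := by ring
      rwa [he] at this
  · left; rfl

lemma chase_spec (n : ℕ) (δ : Fin (n + 2)) (c₀ : Fin (n + 2))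
    (F : (m : ℕ) → (Fin (m + 1) → Fin (n + 2)) → Fin (n + 2))
    (hcop : ∀ m, copSeq c₀ F (chase (n + 2) δ c₀ F) (m + 1) = copSeq c₀ F (chase (n + 2) δ c₀ F) m ∨
      (cycleGraph (n + 2)).Adj (copSeq c₀ F (chase (n + 2) δ c₀ F) m)
        (copSeq c₀ F (chase (n + 2) δ c₀ F) (m + 1))) :
    ∀ m, chase (n + 2) δ c₀ F m = copSeq c₀ F (chase (n + 2) δ c₀ F) m + δ := by
  intro m
  induction m with
  | zero => rw [chase]; rfl
  | succ m ih =>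
    have hc : copSeq c₀ F (chase (n + 2) δ c₀ F) (m + 1) =
        F m (fun i => chase (n + 2) δ c₀ F i) := rfl
    have hsub : chase (n + 2) δ c₀ F m - δ = copSeq c₀ F (chase (n + 2) δ c₀ F) m := by
      rw [ih]; ring
    rw [chase, hsub, ← hc, if_pos (hcop m), hc]

theorem copWin (m : ℕ) : CopWinRC (cycleGraph (m + 4)) ((m + 4) / 2 - 1) := by
  refine ⟨0, copF (m + 3), fun r hr => ⟨?_, ?_⟩⟩
  · intro t
    match t with
    | 0 =>
      rw [copF_eq]
      split
      · rename_i h'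
        right
        exact h'.choose_spec.1
      · left; rfl
    | t + 1 =>
      left
      rw [copF_eq, copF_eq]
  · rcases h0 : (cycleGraph (m + 4)).dist 0 (r 0) with _ | d
    · exact ⟨0, Or.inl (by rw [show copSeq 0 (copF (m+3)) r 0 = 0 from rfl, h0]; omega)⟩
    · have hconn : (cycleGraph (m + 4)).Connected := cycleGraph_connected (n := m + 3)
      have hex := exists_adj_of_dist _ hconn h0
      refine ⟨0, Or.inr ?_⟩
      rw [copF_eq, dif_pos hex]
      have hspec := hex.choose_spec.2
      have hecc : (cycleGraph (m + 4)).dist 0 (r 0) ≤ (m + 4) / 2 := cycle_ecc (m + 2) 0 (r 0)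
      omega

theorem robberWin (m : ℕ) (k : ℕ) (hk : k < (m + 4) / 2 - 1) :
    ¬ CopWinRC (cycleGraph (m + 4)) k := by
  rintro ⟨c₀, F, hF⟩
  set δ : Fin (m + 4) := (((m + 4) / 2 : ℕ) : Fin (m + 4)) with hδ
  have hδval : δ.val = (m + 4) / 2 := Fin.val_cast_of_lt (by omega)
  obtain ⟨hcop, t, hcap⟩ := hF (chase (m + 4) δ c₀ F) (chase_legal (m + 2) δ c₀ F)
  have hspec : ∀ t, chase (m + 4) δ c₀ F t = copSeq c₀ F (chase (m + 4) δ c₀ F) t + δ :=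
    chase_spec (m + 2) δ c₀ F hcop
  have hdist : ∀ x : Fin (m + 4), (cycleGraph (m + 4)).dist x (x + δ) = (m + 4) / 2 := by
    intro x
    rw [cycle_dist (m + 2)]
    have h1 : x + δ - x = δ := by ring
    have h2 : x - (x + δ) = 0 - δ := by ring
    rw [h1, h2]
    have hδ0 : δ ≠ 0 := by
      intro h
      rw [h] at hδval
      have h00 : (0 : Fin (m + 4)).val = 0 := rfl
      omega
    have hv := val_add_val (m + 2) δ 0 hδ0
    rw [sub_zero] at hv
    omega
  rcases hcap with hcap | hcap
  · rw [hspec t, hdist] at hcap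
    omega
  · rw [hspec t] at hcap
    have h1 : (cycleGraph (m + 4)).dist (copSeq c₀ F (chase (m + 4) δ c₀ F) t)
        (copSeq c₀ F (chase (m + 4) δ c₀ F) (t + 1)) ≤ 1 := by
      rcases hcop t with h | h
      · rw [h]
        have := SimpleGraph.dist_self (G := cycleGraph (m + 4))
          (v := copSeq c₀ F (chase (m + 4) δ c₀ F) t)
        omega
      · have := SimpleGraph.dist_le (Walk.cons h Walk.nil)
        simpa using this
    have hconn : (cycleGraph (m + 4)).Connected := cycleGraph_connected (n := m + 3)
    have h2 := hconn.dist_triangle (u := copSeq c₀ F (chase (m + 4) δ c₀ F) t)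
      (v := copSeq c₀ F (chase (m + 4) δ c₀ F) (t + 1))
      (w := copSeq c₀ F (chase (m + 4) δ c₀ F) t + δ)
    rw [hdist] at h2
    omega


/-- For any cycle `C_n` with `n ≥ 4`, `rc(C_n) = ⌊n/2⌋ - 1`. -/
theorem rcNum_cycleGraph (n : ℕ) (hn : 4 ≤ n) :
    rcNum (cycleGraph n) = n / 2 - 1 := by
  obtain ⟨m, rfl⟩ : ∃ m, n = m + 4 := ⟨n - 4, by omega⟩
  refine le_antisymm (Nat.sInf_le (copWin m)) (le_csInf ⟨_, copWin m⟩ ?_)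
  intro k hk
  by_contra h
  push_neg at h
  exact robberWin m k (by omega) hk
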